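/- Let B_1, ..., B_n be i.i.d. {0,1}-valued random variables with P(B_i = 1) = 1/2. For 0 ≤ j ≤ n let S_+(j) = #{i ≤ j : B_i = 1} and S_-(j) = #{i ≤ j : B_i = 0}, and let G_j = σ(S_+(j), B_{j+1}, ..., B_n), so that G_n ⊆ G_{n-1} ⊆ ... ⊆ G_0. Then the process M_j = S_+(j) / (1 + S_-(j)) is a supermartingale running backward in j: for every 1 ≤ j ≤ n, E[ M_{j-1} | G_j ] ≤ M_j. -/

import Mathlib

open MeasureTheory ProbabilityTheory

/-- The number of successes among the first `j` coin flips. -/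
def Splus {Ω : Type*} {n : ℕ} (B : Fin n → Ω → ℕ) (j : ℕ) (ω : Ω) : ℕ :=
  (Finset.univ.filter (fun i : Fin n => (i : ℕ) < j ∧ B i ω = 1)).card

/-- The number of failures among the first `j` coin flips. -/
def Sminus {Ω : Type*} {n : ℕ} (B : Fin n → Ω → ℕ) (j : ℕ) (ω : Ω) : ℕ :=
  (Finset.univ.filter (fun i : Fin n => (i : ℕ) < j ∧ B i ω = 0)).card

/-- The knockoff ratio process `M_j = S₊(j) / (1 + S₋(j))`. -/
noncomputable def Mrat {Ω : Type*} {n : ℕ} (B : Fin n → Ω → ℕ) (j : ℕ) (ω : Ω) : ℝ :=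
  (Splus B j ω : ℝ) / (1 + (Sminus B j ω : ℝ))

/-- The backward filtration `G_j = σ(S₊(j), B_{j+1}, ..., B_n)`. -/
def Gfilt {Ω : Type*} [MeasurableSpace Ω] {n : ℕ} (B : Fin n → Ω → ℕ) (j : ℕ) :
    MeasurableSpace Ω :=
  MeasurableSpace.comap (fun ω => Splus B j ω) ⊤
    ⊔ ⨆ i : Fin n, ⨆ _ : j ≤ (i : ℕ), MeasurableSpace.comap (B i) ⊤

namespace KF

lemma fin2 (x : Fin 2) : x = 0 ∨ x = 1 := by omega

/-- count of ones among first `j` coordinates of a pattern. -/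
def cnt1 {n : ℕ} (j : ℕ) (c : Fin n → Fin 2) : ℕ :=
  (Finset.univ.filter fun i : Fin n => (i : ℕ) < j ∧ c i = 1).card

/-- count of zeros among first `j` coordinates of a pattern. -/
def cnt0 {n : ℕ} (j : ℕ) (c : Fin n → Fin 2) : ℕ :=
  (Finset.univ.filter fun i : Fin n => (i : ℕ) < j ∧ c i = 0).card

lemma swap_lt {n j : ℕ} {i k : Fin n} (hi : (i : ℕ) < j) (hk : (k : ℕ) < j) (x : Fin n) :
    ((Equiv.swap i k x : Fin n) : ℕ) < j ↔ (x : ℕ) < j := by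
  rcases eq_or_ne x i with rfl | hxi
  · simp [Equiv.swap_apply_left, hi, hk]
  rcases eq_or_ne x k with rfl | hxk
  · simp [Equiv.swap_apply_right, hi, hk]
  · rw [Equiv.swap_apply_of_ne_of_ne hxi hxk]

lemma cnt_swap {n j : ℕ} (v : Fin 2) (c : Fin n → Fin 2) {i k : Fin n}
    (hi : (i : ℕ) < j) (hk : (k : ℕ) < j) :
    (Finset.univ.filter fun x : Fin n => (x : ℕ) < j ∧ (c ∘ Equiv.swap i k) x = v).card
      = (Finset.univ.filter fun x : Fin n => (x : ℕ) < j ∧ c x = v).card := by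
  rw [Finset.card_filter, Finset.card_filter]
  refine Fintype.sum_equiv (Equiv.swap i k) _ _ fun x => ?_
  have h := swap_lt hi hk x
  exact if_congr (and_congr_left' h.symm) rfl rfl

lemma cnt1_swap {n j : ℕ} (c : Fin n → Fin 2) {i k : Fin n}
    (hi : (i : ℕ) < j) (hk : (k : ℕ) < j) :
    cnt1 j (c ∘ Equiv.swap i k) = cnt1 j c :=
  cnt_swap 1 c hi hk

lemma card_filter_lt {n j : ℕ} (hjn : j ≤ n) :
    (Finset.univ.filter fun i : Fin n => (i : ℕ) < j).card = j := by
  have h : (Finset.univ.filter fun i : Fin n => (i : ℕ) < j)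
      = Finset.map (Fin.castLEEmb hjn) Finset.univ := by
    ext x
    simp only [Finset.mem_filter, Finset.mem_univ, true_and, Finset.mem_map]
    constructor
    · intro hx
      exact ⟨⟨(x : ℕ), hx⟩, by ext; simp [Fin.castLEEmb, Fin.castLE]⟩
    · rintro ⟨y, rfl⟩
      simpa [Fin.castLEEmb, Fin.castLE] using y.isLt
  rw [h, Finset.card_map, Finset.card_univ, Fintype.card_fin]

lemma cnt1_add_cnt0 {n j : ℕ} (hjn : j ≤ n) (c : Fin n → Fin 2) :
    cnt1 j c + cnt0 j c = j := by
  classical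
  have h := Finset.card_filter_add_card_filter_not
    (s := Finset.univ.filter fun i : Fin n => (i : ℕ) < j) (p := fun i => c i = 1)
  rw [Finset.filter_filter, Finset.filter_filter] at h
  have h2 : (Finset.univ.filter fun i : Fin n => (i : ℕ) < j ∧ ¬ c i = 1)
      = (Finset.univ.filter fun i : Fin n => (i : ℕ) < j ∧ c i = 0) := by
    apply Finset.filter_congr
    intro x _
    rcases fin2 (c x) with hx | hx <;> simp [hx]
  rw [h2, card_filter_lt hjn] at h
  exact h

lemma cnt_split {n j : ℕ} (hj1 : 1 ≤ j) (hjn : j ≤ n) (v : Fin 2) (c : Fin n → Fin 2)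
    (p : Fin n) (hp : (p : ℕ) = j - 1) :
    (Finset.univ.filter fun x : Fin n => (x : ℕ) < j ∧ c x = v).card
      = (Finset.univ.filter fun x : Fin n => (x : ℕ) < j - 1 ∧ c x = v).card
        + (if c p = v then 1 else 0) := by
  classical
  rw [Finset.card_filter, Finset.card_filter]
  have key : ∀ x : Fin n,
      (if (x : ℕ) < j ∧ c x = v then (1 : ℕ) else 0)
        = (if (x : ℕ) < j - 1 ∧ c x = v then 1 else 0)
          + (if x = p then (if c p = v then 1 else 0) else 0) := by
    intro x
    rcases eq_or_ne x p with rfl | hxp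
    · by_cases hv : c x = v <;> simp [hv, hp] <;> omega
    · have hx : (x : ℕ) ≠ j - 1 := fun h => hxp (Fin.ext (by rw [h, hp]))
      have : ((x : ℕ) < j ↔ (x : ℕ) < j - 1) := by omega
      simp [hxp, this]
  rw [Finset.sum_congr rfl fun x _ => key x, Finset.sum_add_distrib,
    Finset.sum_ite_eq' Finset.univ p fun _ => (if c p = v then 1 else 0)]
  simp

lemma key_sum {n j : ℕ} (hj1 : 1 ≤ j) (hjn : j ≤ n) (W : Finset (Fin n → Fin 2))
    (hW : ∀ (i k : Fin n), (i : ℕ) < j → (k : ℕ) < j → ∀ c ∈ W, c ∘ Equiv.swap i k ∈ W)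
    {p : Fin n} (hp : (p : ℕ) < j) (h : ℕ → ℝ) :
    ∑ c ∈ W, ((c p : ℕ) : ℝ) * h (cnt1 j c)
      = ∑ c ∈ W, ((cnt1 j c : ℝ) / j) * h (cnt1 j c) := by
  classical
  have hj0 : (j : ℝ) ≠ 0 := Nat.cast_ne_zero.mpr (by omega)
  have step1 : ∀ i : Fin n, (i : ℕ) < j →
      ∑ c ∈ W, ((c i : ℕ) : ℝ) * h (cnt1 j c)
        = ∑ c ∈ W, ((c p : ℕ) : ℝ) * h (cnt1 j c) := by
    intro i hi
    refine Finset.sum_nbij' (fun c => c ∘ Equiv.swap i p) (fun c => c ∘ Equiv.swap i p)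
      (fun c hc => hW i p hi hp c hc) (fun c hc => hW i p hi hp c hc)
      (fun c _ => funext fun x => by simp [Function.comp, Equiv.swap_apply_self])
      (fun c _ => funext fun x => by simp [Function.comp, Equiv.swap_apply_self])
      (fun c _ => ?_)
    rw [cnt1_swap c hi hp]
    simp [Function.comp, Equiv.swap_apply_right]
  have inner : ∀ c : Fin n → Fin 2,
      ∑ i ∈ Finset.univ.filter (fun i : Fin n => (i : ℕ) < j), ((c i : ℕ) : ℝ)
        = (cnt1 j c : ℝ) := by
    intro c
    have hval : ∀ i : Fin n, ((c i : ℕ) : ℝ) = if c i = 1 then 1 else 0 := by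
      intro i; rcases fin2 (c i) with hx | hx <;> simp [hx]
    rw [Finset.sum_congr rfl fun i _ => hval i, Finset.sum_boole, Finset.filter_filter]
    rfl
  have step2 : ∑ c ∈ W, (cnt1 j c : ℝ) * h (cnt1 j c)
      = (j : ℝ) * ∑ c ∈ W, ((c p : ℕ) : ℝ) * h (cnt1 j c) := by
    calc ∑ c ∈ W, (cnt1 j c : ℝ) * h (cnt1 j c)
        = ∑ c ∈ W, (∑ i ∈ Finset.univ.filter (fun i : Fin n => (i : ℕ) < j),
            ((c i : ℕ) : ℝ)) * h (cnt1 j c) := by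
          exact Finset.sum_congr rfl fun c _ => by rw [inner c]
      _ = ∑ c ∈ W, ∑ i ∈ Finset.univ.filter (fun i : Fin n => (i : ℕ) < j),
            ((c i : ℕ) : ℝ) * h (cnt1 j c) := by
          exact Finset.sum_congr rfl fun c _ => Finset.sum_mul _ _ _
      _ = ∑ i ∈ Finset.univ.filter (fun i : Fin n => (i : ℕ) < j),
            ∑ c ∈ W, ((c i : ℕ) : ℝ) * h (cnt1 j c) := Finset.sum_comm
      _ = ∑ i ∈ Finset.univ.filter (fun i : Fin n => (i : ℕ) < j),
            ∑ c ∈ W, ((c p : ℕ) : ℝ) * h (cnt1 j c) := by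
          exact Finset.sum_congr rfl fun i hi =>
            step1 i (by simpa using (Finset.mem_filter.mp hi).2)
      _ = (j : ℝ) * ∑ c ∈ W, ((c p : ℕ) : ℝ) * h (cnt1 j c) := by
          rw [Finset.sum_const, card_filter_lt hjn, nsmul_eq_mul]
  calc ∑ c ∈ W, ((c p : ℕ) : ℝ) * h (cnt1 j c)
      = ((j : ℝ) * ∑ c ∈ W, ((c p : ℕ) : ℝ) * h (cnt1 j c)) / j := by
        rw [mul_div_cancel_left₀ _ hj0]
    _ = (∑ c ∈ W, (cnt1 j c : ℝ) * h (cnt1 j c)) / j := by rw [step2]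
    _ = ∑ c ∈ W, ((cnt1 j c : ℝ) / j) * h (cnt1 j c) := by
        rw [Finset.sum_div]
        exact Finset.sum_congr rfl fun c _ => by ring

/-- auxiliary function: value of `M_{j-1}` when the removed coin is a success. -/
noncomputable def hone (j s : ℕ) : ℝ := ((s : ℝ) - 1) / (((j : ℝ) - (s : ℝ)) + 1)

/-- auxiliary function: value of `M_{j-1}` when the removed coin is a failure. -/
noncomputable def htwo (j s : ℕ) : ℝ := (s : ℝ) / ((j : ℝ) - (s : ℝ))

/-- The candidate conditional expectation, as a function of `s = S₊(j)`. -/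
noncomputable def nfun (j s : ℕ) : ℝ :=
  ((s : ℝ) / j) * hone j s + (1 - (s : ℝ) / j) * htwo j s

lemma nfun_le (j s t : ℕ) (hj1 : 1 ≤ j) (hst : s + t = j) :
    nfun j s ≤ (s : ℝ) / (1 + (t : ℝ)) := by
  have hjr : (j : ℝ) = (s : ℝ) + (t : ℝ) := by exact_mod_cast hst.symm
  have hj0 : (j : ℝ) ≠ 0 := Nat.cast_ne_zero.mpr (by omega)
  have hjs : (j : ℝ) - (s : ℝ) = (t : ℝ) := by rw [hjr]; ring
  unfold nfun hone htwo
  rcases Nat.eq_zero_or_pos t with ht | ht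
  · subst ht
    have hs : (s : ℝ) = (j : ℝ) := by rw [hjr]; simp
    rw [hjs, hs, div_self hj0]
    have h1 : (1 : ℝ) ≤ (j : ℝ) := by exact_mod_cast hj1
    simp only [Nat.cast_zero, div_zero, mul_zero, add_zero, sub_self, zero_mul, one_mul]
    rw [div_one]
    linarith
  · have hb : (0 : ℝ) < (t : ℝ) := by exact_mod_cast ht
    have hs0 : (0 : ℝ) ≤ (s : ℝ) := Nat.cast_nonneg s
    have hjpos : (0 : ℝ) < (j : ℝ) := by rw [hjr]; linarith
    apply le_of_eq
    rw [hjs, hjr]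
    field_simp
    ring

end KF

namespace KF

lemma m_decomp {n j : ℕ} (hj1 : 1 ≤ j) (hjn : j ≤ n) (c : Fin n → Fin 2)
    (p : Fin n) (hp : (p : ℕ) = j - 1) :
    (cnt1 (j - 1) c : ℝ) / (1 + (cnt0 (j - 1) c : ℝ))
      = ((c p : ℕ) : ℝ) * hone j (cnt1 j c)
        + (1 - ((c p : ℕ) : ℝ)) * htwo j (cnt1 j c) := by
  have hs1 : cnt1 j c = cnt1 (j - 1) c + (if c p = 1 then 1 else 0) :=
    cnt_split hj1 hjn 1 c p hp
  have hs0 : cnt0 j c = cnt0 (j - 1) c + (if c p = 0 then 1 else 0) :=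
    cnt_split hj1 hjn 0 c p hp
  have hjs : (j : ℝ) - (cnt1 j c : ℝ) = (cnt0 j c : ℝ) := by
    have h := cnt1_add_cnt0 hjn c
    have h' : ((cnt1 j c + cnt0 j c : ℕ) : ℝ) = (j : ℝ) := by rw [h]
    push_cast at h'
    linarith
  unfold hone htwo
  rw [hjs]
  rcases fin2 (c p) with hcp | hcp
  · rw [hcp] at hs1 hs0
    simp only [hcp] at *
    norm_num at hs1 hs0
    rw [hs1, hs0]
    push_cast [Fin.val_zero]
    ring
  · rw [hcp] at hs1 hs0
    simp only [hcp] at *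
    norm_num at hs1 hs0
    rw [hs1, hs0]
    push_cast [Fin.val_one]
    ring

end KF

open KF

section Measure

variable {Ω : Type*} [MeasurableSpace Ω] {n : ℕ} {B : Fin n → Ω → ℕ}

/-- The pattern map `Ω → (Fin n → Fin 2)`. -/
def ee (B : Fin n → Ω → ℕ) (ω : Ω) : Fin n → Fin 2 :=
  fun i => if B i ω = 1 then 1 else 0

lemma ee_meas (hBmeas : ∀ i, Measurable (B i)) : Measurable (ee B) :=
  measurable_pi_lambda _ fun i =>
    (Measurable.of_discrete (f := fun m : ℕ => if m = 1 then (1 : Fin 2) else 0)).comp (hBmeas i)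

lemma ee_eq_iff (hBval : ∀ i, ∀ ω, B i ω = 0 ∨ B i ω = 1) (ω : Ω) (i : Fin n) (x : Fin 2) :
    ee B ω i = x ↔ B i ω = (x : ℕ) := by
  rcases hBval i ω with h | h <;> rcases fin2 x with rfl | rfl <;>
    simp [ee, h]

lemma Splus_eq (hBval : ∀ i, ∀ ω, B i ω = 0 ∨ B i ω = 1) (k : ℕ) (ω : Ω) :
    Splus B k ω = cnt1 k (ee B ω) := by
  unfold Splus cnt1
  congr 1
  ext i
  simp only [Finset.mem_filter, Finset.mem_univ, true_and]
  rw [ee_eq_iff hBval ω i 1]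
  rfl

lemma Sminus_eq (hBval : ∀ i, ∀ ω, B i ω = 0 ∨ B i ω = 1) (k : ℕ) (ω : Ω) :
    Sminus B k ω = cnt0 k (ee B ω) := by
  unfold Sminus cnt0
  congr 1
  ext i
  simp only [Finset.mem_filter, Finset.mem_univ, true_and]
  rw [ee_eq_iff hBval ω i 0]
  rfl

/-- The "sufficient statistic" for `G_j`. -/
def psi {n : ℕ} (j : ℕ) (c : Fin n → Fin 2) : ℕ × (Fin n → Fin 2) :=
  (cnt1 j c, fun i => if j ≤ (i : ℕ) then c i else 0)

lemma psi_swap {j : ℕ} (c : Fin n → Fin 2) {i k : Fin n}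
    (hi : (i : ℕ) < j) (hk : (k : ℕ) < j) :
    psi j (c ∘ Equiv.swap i k) = psi j c := by
  unfold psi
  refine Prod.ext (cnt1_swap c hi hk) (funext fun x => ?_)
  by_cases hx : j ≤ (x : ℕ)
  · have hxi : x ≠ i := fun h => absurd hi (by rw [← h]; omega)
    have hxk : x ≠ k := fun h => absurd hk (by rw [← h]; omega)
    simp [hx, Function.comp, Equiv.swap_apply_of_ne_of_ne hxi hxk]
  · simp [hx]

lemma G_le (hBval : ∀ i, ∀ ω, B i ω = 0 ∨ B i ω = 1) (j : ℕ) :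
    Gfilt B j ≤ MeasurableSpace.comap (fun ω => psi j (ee B ω)) ⊤ := by
  unfold Gfilt
  apply sup_le
  · have h : (fun ω => Splus B j ω)
        = (fun q : ℕ × (Fin n → Fin 2) => q.1) ∘ (fun ω => psi j (ee B ω)) :=
      funext fun ω => Splus_eq hBval j ω
    rw [h, ← MeasurableSpace.comap_comp]
    exact MeasurableSpace.comap_mono le_top
  · apply iSup_le; intro i; apply iSup_le; intro hij
    have h : B i = (fun q : ℕ × (Fin n → Fin 2) => ((q.2 i : ℕ)))
        ∘ (fun ω => psi j (ee B ω)) := by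
      funext ω
      have : B i ω = ((ee B ω i : ℕ)) := (ee_eq_iff hBval ω i (ee B ω i)).mp rfl
      simp only [Function.comp_apply, psi, hij, if_true]
      exact this
    rw [h, ← MeasurableSpace.comap_comp]
    exact MeasurableSpace.comap_mono le_top

lemma atom_meas (μ : Measure Ω) [IsProbabilityMeasure μ]
    (hBmeas : ∀ i, Measurable (B i))
    (hBval : ∀ i, ∀ ω, B i ω = 0 ∨ B i ω = 1)
    (hBfair : ∀ i, μ {ω | B i ω = 1} = 2⁻¹)
    (hBindep : iIndepFun B μ)
    (c : Fin n → Fin 2) :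
    Measure.map (ee B) μ {c} = 2⁻¹ ^ n := by
  rw [Measure.map_apply (ee_meas hBmeas) (measurableSet_singleton c)]
  have hpre : ee B ⁻¹' {c} = ⋂ i, B i ⁻¹' {((c i : ℕ))} := by
    ext ω
    simp only [Set.mem_preimage, Set.mem_singleton_iff, Set.mem_iInter, funext_iff]
    exact forall_congr' fun i => ee_eq_iff hBval ω i (c i)
  have hhalf : ∀ i : Fin n, μ (B i ⁻¹' {((c i : ℕ))}) = 2⁻¹ := by
    intro i
    have hone : B i ⁻¹' {(1 : ℕ)} = {ω | B i ω = 1} := rfl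
    rcases fin2 (c i) with h | h
    · rw [h]
      have hcompl : B i ⁻¹' {(((0 : Fin 2)) : ℕ)} = (B i ⁻¹' {(1 : ℕ)})ᶜ := by
        ext ω; rcases hBval i ω with h' | h' <;> simp [h']
      rw [hcompl, measure_compl ((hBmeas i) (measurableSet_singleton 1)) (measure_ne_top μ _),
        measure_univ, hone, hBfair i]
      exact ENNReal.one_sub_inv_two
    · rw [h]
      show μ (B i ⁻¹' {(1 : ℕ)}) = 2⁻¹
      rw [hone, hBfair i]
  have hind := hBindep.measure_inter_preimage_eq_mul Finset.univ
    (sets := fun i => {((c i : ℕ))}) (fun i _ => measurableSet_singleton _)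
  have huniv : (⋂ i, B i ⁻¹' {((c i : ℕ))}) = ⋂ i ∈ Finset.univ, B i ⁻¹' {((c i : ℕ))} := by
    simp
  rw [hpre, huniv, hind]
  simp only [hhalf, Finset.prod_const, Finset.card_univ, Fintype.card_fin]

lemma setIntegral_ee (μ : Measure Ω) [IsProbabilityMeasure μ]
    (hBmeas : ∀ i, Measurable (B i))
    (hBval : ∀ i, ∀ ω, B i ω = 0 ∨ B i ω = 1)
    (hBfair : ∀ i, μ {ω | B i ω = 1} = 2⁻¹)
    (hBindep : iIndepFun B μ)
    (g : (Fin n → Fin 2) → ℝ) (S : Set (Fin n → Fin 2)) :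
    ∫ ω in ee B ⁻¹' S, g (ee B ω) ∂μ
      = ∑ c ∈ (Set.toFinite S).toFinset, (2⁻¹ : ℝ) ^ n * g c := by
  classical
  haveI : IsProbabilityMeasure (Measure.map (ee B) μ) :=
    Measure.isProbabilityMeasure_map (ee_meas hBmeas).aemeasurable
  rw [← setIntegral_map (MeasurableSet.of_discrete)
    (Measurable.of_discrete.aestronglyMeasurable) (ee_meas hBmeas).aemeasurable]
  set t := (Set.toFinite S).toFinset with ht
  have hSet : S = ↑t := by
    ext x; simp only [t, Finset.mem_coe, Set.Finite.mem_toFinset]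
  rw [hSet, MeasureTheory.setIntegral_finset t
    (Integrable.integrableOn (Integrable.of_finite (μ := Measure.map (ee B) μ) (f := g)))]
  refine Finset.sum_congr rfl fun c _ => ?_
  rw [measureReal_def, atom_meas μ hBmeas hBval hBfair hBindep c, smul_eq_mul]
  congr 1
  rw [ENNReal.toReal_pow, ENNReal.toReal_inv]
  norm_num

end Measure

/-- For i.i.d. fair `{0,1}` coins `B_1, ..., B_n`, the ratio process
`M_j = S₊(j)/(1 + S₋(j))` is a supermartingale running backward in `j` with respect to
the filtration `G_j = σ(S₊(j), B_{j+1}, ..., B_n)`: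
for `1 ≤ j ≤ n`, `E[M_{j-1} | G_j] ≤ M_j` a.s. -/
theorem stmt_14 {Ω : Type*} [MeasurableSpace Ω] (μ : Measure Ω) [IsProbabilityMeasure μ]
    (n : ℕ) (B : Fin n → Ω → ℕ) (hBmeas : ∀ i, Measurable (B i))
    (hBval : ∀ i, ∀ ω, B i ω = 0 ∨ B i ω = 1)
    (hBfair : ∀ i, μ {ω | B i ω = 1} = 2⁻¹)
    (hBindep : iIndepFun B μ)
    (j : ℕ) (hj1 : 1 ≤ j) (hjn : j ≤ n) :
    ∀ᵐ ω ∂μ, (μ[fun ω' => Mrat B (j - 1) ω' | Gfilt B j]) ω ≤ Mrat B j ω := by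
  classical
  have hcomap_le : MeasurableSpace.comap (fun ω => psi j (ee B ω)) ⊤
      ≤ ‹MeasurableSpace Ω› := by
    rintro t ⟨S', -, rfl⟩
    exact (ee_meas hBmeas) (MeasurableSet.of_discrete (s := psi j ⁻¹' S'))
  have hm : Gfilt B j ≤ ‹MeasurableSpace Ω› := (G_le hBval j).trans hcomap_le
  haveI : SigmaFinite (μ.trim hm) := by
    haveI := MeasureTheory.isFiniteMeasure_trim (μ := μ) hm
    infer_instance
  haveI : IsProbabilityMeasure (Measure.map (ee B) μ) :=
    Measure.isProbabilityMeasure_map (ee_meas hBmeas).aemeasurable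
  have hp_lt : j - 1 < n := by omega
  set p : Fin n := ⟨j - 1, hp_lt⟩ with hpdef
  have hpj : (p : ℕ) < j := by simp only [hpdef]; omega
  -- the candidate conditional expectation
  set N : Ω → ℝ := fun ω => nfun j (Splus B j ω) with hNdef
  have hNfac : ∀ ω, N ω = nfun j (cnt1 j (ee B ω)) := fun ω => by
    simp only [hNdef, Splus_eq hBval]
  have hMfac : ∀ ω, Mrat B (j - 1) ω
      = (cnt1 (j - 1) (ee B ω) : ℝ) / (1 + (cnt0 (j - 1) (ee B ω) : ℝ)) := fun ω => by
    rw [Mrat, Splus_eq hBval, Sminus_eq hBval]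
  -- integrability
  have hMint : Integrable (fun ω' => Mrat B (j - 1) ω') μ := by
    have h : (fun ω' => Mrat B (j - 1) ω')
        = (fun c : Fin n → Fin 2 => (cnt1 (j - 1) c : ℝ) / (1 + (cnt0 (j - 1) c : ℝ)))
          ∘ (ee B) := funext fun ω => hMfac ω
    rw [h]
    exact (integrable_map_measure Measurable.of_discrete.aestronglyMeasurable
      (ee_meas hBmeas).aemeasurable).mp Integrable.of_finite
  have hNint : Integrable N μ := by
    have h : N = (fun c : Fin n → Fin 2 => nfun j (cnt1 j c)) ∘ (ee B) :=
      funext fun ω => hNfac ω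
    rw [h]
    exact (integrable_map_measure Measurable.of_discrete.aestronglyMeasurable
      (ee_meas hBmeas).aemeasurable).mp Integrable.of_finite
  -- N is G_j-measurable
  have hNmeas : AEStronglyMeasurable[Gfilt B j] N μ := by
    refine StronglyMeasurable.aestronglyMeasurable (Measurable.stronglyMeasurable ?_)
    have h1 : Measurable[Gfilt B j] (fun ω => Splus B j ω) :=
      Measurable.mono (Measurable.of_comap_le le_rfl) le_sup_left le_rfl
    exact (Measurable.of_discrete (f := nfun j)).comp h1
  -- set-integral equality on G_j
  have hEq : ∀ t : Set Ω, MeasurableSet[Gfilt B j] t → μ t < ⊤ →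
      ∫ ω in t, N ω ∂μ = ∫ ω in t, Mrat B (j - 1) ω ∂μ := by
    intro t ht _
    obtain ⟨S', -, rfl⟩ := MeasurableSpace.measurableSet_comap.mp ((G_le hBval j) t ht)
    have hpre : (fun ω => psi j (ee B ω)) ⁻¹' S' = ee B ⁻¹' (psi j ⁻¹' S') := rfl
    rw [hpre]
    have hW : ∀ (i k : Fin n), (i : ℕ) < j → (k : ℕ) < j →
        ∀ c ∈ (Set.toFinite (psi j ⁻¹' S')).toFinset, c ∘ Equiv.swap i k ∈ (Set.toFinite (psi j ⁻¹' S')).toFinset := by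
      intro i k hi hk c hc
      rw [Set.Finite.mem_toFinset] at hc ⊢
      simpa [Set.mem_preimage, psi_swap c hi hk] using hc
    have hcomb : ∑ c ∈ (Set.toFinite (psi j ⁻¹' S')).toFinset, nfun j (cnt1 j c)
        = ∑ c ∈ (Set.toFinite (psi j ⁻¹' S')).toFinset, (cnt1 (j - 1) c : ℝ) / (1 + (cnt0 (j - 1) c : ℝ)) := by
      have e1 : ∑ c ∈ (Set.toFinite (psi j ⁻¹' S')).toFinset, (cnt1 (j - 1) c : ℝ) / (1 + (cnt0 (j - 1) c : ℝ))
          = (∑ c ∈ (Set.toFinite (psi j ⁻¹' S')).toFinset, ((c p : ℕ) : ℝ) * hone j (cnt1 j c))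
            + ((∑ c ∈ (Set.toFinite (psi j ⁻¹' S')).toFinset, htwo j (cnt1 j c))
              - ∑ c ∈ (Set.toFinite (psi j ⁻¹' S')).toFinset, ((c p : ℕ) : ℝ) * htwo j (cnt1 j c)) := by
        rw [← Finset.sum_sub_distrib, ← Finset.sum_add_distrib]
        refine Finset.sum_congr rfl fun c _ => ?_
        rw [m_decomp hj1 hjn c p (by simp [hpdef])]
        ring
      rw [e1, key_sum hj1 hjn _ hW hpj (hone j), key_sum hj1 hjn _ hW hpj (htwo j),
        ← Finset.sum_sub_distrib, ← Finset.sum_add_distrib]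
      refine Finset.sum_congr rfl fun c _ => ?_
      unfold nfun
      ring
    calc ∫ ω in ee B ⁻¹' (psi j ⁻¹' S'), N ω ∂μ
        = ∫ ω in ee B ⁻¹' (psi j ⁻¹' S'), nfun j (cnt1 j (ee B ω)) ∂μ :=
          integral_congr_ae (Filter.Eventually.of_forall fun ω => hNfac ω)
      _ = ∑ c ∈ (Set.toFinite (psi j ⁻¹' S')).toFinset, (2⁻¹ : ℝ) ^ n * nfun j (cnt1 j c) :=
          setIntegral_ee μ hBmeas hBval hBfair hBindep
            (fun c => nfun j (cnt1 j c)) (psi j ⁻¹' S')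
      _ = ∑ c ∈ (Set.toFinite (psi j ⁻¹' S')).toFinset, (2⁻¹ : ℝ) ^ n
            * ((cnt1 (j - 1) c : ℝ) / (1 + (cnt0 (j - 1) c : ℝ))) := by
          rw [← Finset.mul_sum, ← Finset.mul_sum, hcomb]
      _ = ∫ ω in ee B ⁻¹' (psi j ⁻¹' S'),
            (cnt1 (j - 1) (ee B ω) : ℝ) / (1 + (cnt0 (j - 1) (ee B ω) : ℝ)) ∂μ :=
          (setIntegral_ee μ hBmeas hBval hBfair hBindep
            (fun c => (cnt1 (j - 1) c : ℝ) / (1 + (cnt0 (j - 1) c : ℝ)))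
            (psi j ⁻¹' S')).symm
      _ = ∫ ω in ee B ⁻¹' (psi j ⁻¹' S'), Mrat B (j - 1) ω ∂μ :=
          integral_congr_ae (Filter.Eventually.of_forall fun ω => (hMfac ω).symm)
  have hNcond : N =ᵐ[μ] μ[fun ω' => Mrat B (j - 1) ω' | Gfilt B j] :=
    ae_eq_condExp_of_forall_setIntegral_eq hm hMint
      (fun s _ _ => hNint.integrableOn) hEq hNmeas
  filter_upwards [hNcond] with ω hω
  rw [← hω]
  have hst : Splus B j ω + Sminus B j ω = j := by
    rw [Splus_eq hBval, Sminus_eq hBval]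
    exact cnt1_add_cnt0 hjn _
  show nfun j (Splus B j ω) ≤ Mrat B j ω
  exact nfun_le j _ _ hj1 hst
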